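/- Let n ≥ 1 and let k : ℝ → ℝ be continuous on [-1,1]. Suppose that for every infinitely differentiable f : ℝ → ℝ and every x₀ ∈ ℝ, the limit as h → 0⁺ of (−1/h)ⁿ ∫_{-1}^{1} k(t) f(x₀ + h t) dt equals f⁽ⁿ⁾(x₀). Then ∫_{-1}^{1} tʲ k(t) dt = 0 for every integer j with 0 ≤ j ≤ n−1, and ∫_{-1}^{1} tⁿ k(t) dt = (−1)ⁿ · n!. -/

import Mathlib

open Filter Topology intervalIntegral Set

lemma my_iter_deriv_pow (j : ℕ) : ∀ m : ℕ, iteratedDeriv m (fun x : ℝ => x ^ j)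
    = fun x : ℝ => (j.descFactorial m : ℝ) * x ^ (j - m) := by
  intro m
  induction m with
  | zero => simp
  | succ m ih =>
    rw [iteratedDeriv_succ, ih]
    funext x
    rw [deriv_const_mul _ (differentiable_pow _ x), deriv_pow_field]
    rw [Nat.descFactorial_succ]
    push_cast
    have : j - m - 1 = j - (m + 1) := by omega
    rw [this]
    ring


/-- Necessary moment conditions on an n-th order kernel: if `k` is continuous on `[-1,1]`
and `(−1/h)ⁿ ∫_{-1}^{1} k(t) f(x₀+ht) dt → f⁽ⁿ⁾(x₀)` as `h → 0⁺` for every smooth `f`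
and every `x₀`, then `∫_{-1}^{1} tʲ k(t) dt = 0` for `0 ≤ j ≤ n−1` and
`∫_{-1}^{1} tⁿ k(t) dt = (−1)ⁿ n!`. -/
theorem nth_order_kernel_moments (n : ℕ) (hn : 1 ≤ n) (k : ℝ → ℝ)
    (hk : ContinuousOn k (Icc (-1 : ℝ) 1))
    (hker : ∀ f : ℝ → ℝ, ContDiff ℝ (⊤ : ℕ∞) f → ∀ x₀ : ℝ,
      Tendsto (fun h : ℝ => (-1 / h) ^ n * ∫ t in (-1 : ℝ)..1, k t * f (x₀ + h * t))
        (𝓝[>] (0 : ℝ)) (𝓝 (iteratedDeriv n f x₀))) :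
    (∀ j < n, (∫ t in (-1 : ℝ)..1, t ^ j * k t) = 0) ∧
      (∫ t in (-1 : ℝ)..1, t ^ n * k t) = (-1 : ℝ) ^ n * n.factorial := by
  -- general setup for monomials
  have key : ∀ j : ℕ, Tendsto
      (fun h : ℝ => (-1 / h) ^ n * (h ^ j * ∫ t in (-1 : ℝ)..1, t ^ j * k t))
      (𝓝[>] (0 : ℝ)) (𝓝 ((j.descFactorial n : ℝ) * (0 : ℝ) ^ (j - n))) := by
    intro j
    have hcd : ContDiff ℝ (⊤ : ℕ∞) (fun x : ℝ => x ^ j) := contDiff_id.pow j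
    have := hker (fun x : ℝ => x ^ j) hcd 0
    rw [my_iter_deriv_pow j n] at this
    convert this using 2 with h
    rw [← intervalIntegral.integral_const_mul]
    congr 1
    apply intervalIntegral.integral_congr
    intro t _
    simp only
    ring
  constructor
  · intro j hj
    set M := ∫ t in (-1 : ℝ)..1, t ^ j * k t with hM
    have hd : (j.descFactorial n : ℝ) = 0 := by
      rw [Nat.descFactorial_eq_zero_iff_lt.2 hj]; simp
    have hlim0 : Tendsto
        (fun h : ℝ => ((-1 / h) ^ n * (h ^ j * M)) * h ^ (n - j))
        (𝓝[>] (0 : ℝ)) (𝓝 0) := by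
      have h2 : Tendsto (fun h : ℝ => h ^ (n - j)) (𝓝[>] (0 : ℝ)) (𝓝 0) := by
        have := ((continuous_pow (n - j)).tendsto 0).mono_left
          (nhdsWithin_le_nhds (s := Ioi (0:ℝ)))
        rwa [zero_pow (by omega)] at this
      have := (key j).mul h2
      simpa [hd] using this
    have heq : ∀ᶠ h in 𝓝[>] (0 : ℝ),
        ((-1 / h) ^ n * (h ^ j * M)) * h ^ (n - j) = (-1 : ℝ) ^ n * M := by
      filter_upwards [self_mem_nhdsWithin] with h (hh : 0 < h)
      have hne : h ≠ 0 := ne_of_gt hh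
      have hpow : h ^ j * h ^ (n - j) = h ^ n := by
        rw [← pow_add, Nat.add_sub_cancel' hj.le]
      rw [div_pow, div_mul_eq_mul_div, div_mul_eq_mul_div, div_eq_iff (pow_ne_zero n hne),
        mul_assoc, mul_assoc, mul_comm M, ← mul_assoc (h^j), hpow]
      ring
    have : Tendsto (fun _ : ℝ => (-1 : ℝ) ^ n * M) (𝓝[>] (0 : ℝ)) (𝓝 0) :=
      hlim0.congr' heq
    have h0 : (-1 : ℝ) ^ n * M = 0 := tendsto_nhds_unique tendsto_const_nhds this
    have hne : ((-1 : ℝ) ^ n) ≠ 0 := by positivity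
    exact (mul_eq_zero.1 h0).resolve_left hne
  · set M := ∫ t in (-1 : ℝ)..1, t ^ n * k t with hM
    have hd : ((n.descFactorial n : ℝ) * (0 : ℝ) ^ (n - n)) = (n.factorial : ℝ) := by
      simp [Nat.descFactorial_self]
    have heq : ∀ᶠ h in 𝓝[>] (0 : ℝ),
        (-1 / h) ^ n * (h ^ n * M) = (-1 : ℝ) ^ n * M := by
      filter_upwards [self_mem_nhdsWithin] with h (hh : 0 < h)
      have hne : h ≠ 0 := ne_of_gt hh
      field_simp [div_pow]
      have h1 : h ^ n * h⁻¹ ^ n = 1 := by rw [← mul_pow, mul_inv_cancel₀ hne, one_pow]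
      linear_combination (M * (-1) ^ n) * h1
    have : Tendsto (fun _ : ℝ => (-1 : ℝ) ^ n * M) (𝓝[>] (0 : ℝ))
        (𝓝 ((n.descFactorial n : ℝ) * (0 : ℝ) ^ (n - n))) := (key n).congr' heq
    have h0 : (-1 : ℝ) ^ n * M = (n.factorial : ℝ) := by
      rw [← hd]; exact tendsto_nhds_unique tendsto_const_nhds this
    have : (-1 : ℝ) ^ n * ((-1 : ℝ) ^ n * M) = (-1 : ℝ) ^ n * (n.factorial : ℝ) := by
      rw [h0]
    calc M = (-1 : ℝ) ^ n * ((-1 : ℝ) ^ n * M) := by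
            rw [← mul_assoc, ← mul_pow]; norm_num
      _ = (-1 : ℝ) ^ n * n.factorial := by rw [h0]
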